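/- With α(c,p,n,h) := n·c + n³h²/(2p(n−p)) − n|n−2p|·h·√(n²h²+4c·p(n−p))/(2p(n−p)), for fixed c ≥ 0, integers n ≥ 2 and 1 ≤ p ≤ n−1, the minimum over h ≥ 0 of α(c,p,n,h) − n·h² equals 4c·p(n−p)/n, and equality holds if and only if n²h² + 4c·p(n−p) = n²c. -/

import Mathlib

/-- The pinching function
`α(c,p,n,h) = n·c + n³h²/(2p(n−p)) − n|n−2p|·h·√(n²h² + 4c·p(n−p))/(2p(n−p))`. -/
noncomputable def pinchAlpha (c : ℝ) (p n : ℕ) (h : ℝ) : ℝ :=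
  n * c + n ^ 3 * h ^ 2 / (2 * p * ((n : ℝ) - p)) -
    n * |(n : ℝ) - 2 * p| * h * Real.sqrt (n ^ 2 * h ^ 2 + 4 * c * p * ((n : ℝ) - p)) /
      (2 * p * ((n : ℝ) - p))


/-- For fixed `c ≥ 0`, `n ≥ 2` and `1 ≤ p ≤ n−1`, the minimum over
`h ≥ 0` of `α(c,p,n,h) − n·h²` equals `4c·p(n−p)/n`, and equality holds at some `h ≥ 0`
if and only if `n²h² + 4c·p(n−p) = n²c`. -/
lemma pinch_key (c N pr h s k : ℝ) (hP : 0 < pr * (N - pr)) (hN : 0 < N)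
    (hs2 : s ^ 2 = N ^ 2 * h ^ 2 + 4 * c * pr * (N - pr))
    (hk2 : k ^ 2 = N ^ 2 - 4 * (pr * (N - pr))) :
    N * c + N ^ 3 * h ^ 2 / (2 * pr * (N - pr)) - N * k * h * s / (2 * pr * (N - pr))
      - N * h ^ 2 - 4 * c * pr * (N - pr) / N
      = (k * s - N ^ 2 * h) ^ 2 / (4 * (pr * (N - pr)) * N) := by
  have h1 : pr * (N - pr) ≠ 0 := ne_of_gt hP
  have h2 : N ≠ 0 := ne_of_gt hN
  have h3 : 2 * pr * (N - pr) ≠ 0 := by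
    intro hz; apply h1; linarith [hz]
  rw [add_sub_assoc, div_sub_div_same]
  have h4 : pr ≠ 0 := by rintro rfl; simp at hP
  have h5 : N - pr ≠ 0 := by intro hz; rw [hz] at hP; simp at hP
  field_simp
  linear_combination (-2 * k ^ 2) * hs2 +
    (-2 * (N ^ 2 * h ^ 2 + 4 * c * pr * (N - pr))) * hk2

theorem pinchAlpha_sub_min (c : ℝ) (hc : 0 ≤ c) (n p : ℕ) (hn : 2 ≤ n)
    (hp1 : 1 ≤ p) (hp2 : p ≤ n - 1) :
    (∀ h : ℝ, 0 ≤ h → 4 * c * p * ((n : ℝ) - p) / n ≤ pinchAlpha c p n h - n * h ^ 2) ∧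
      (∃ h : ℝ, 0 ≤ h ∧ pinchAlpha c p n h - n * h ^ 2 = 4 * c * p * ((n : ℝ) - p) / n) ∧
      (∀ h : ℝ, 0 ≤ h →
        (pinchAlpha c p n h - n * h ^ 2 = 4 * c * p * ((n : ℝ) - p) / n ↔
          (n : ℝ) ^ 2 * h ^ 2 + 4 * c * p * ((n : ℝ) - p) = n ^ 2 * c)) := by
  have hN2 : (2 : ℝ) ≤ (n : ℝ) := by exact_mod_cast hn
  have hp1' : (1 : ℝ) ≤ (p : ℝ) := by exact_mod_cast hp1
  have hple : (p : ℝ) ≤ (n : ℝ) - 1 := by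
    have h' : (p : ℝ) ≤ ((n - 1 : ℕ) : ℝ) := by exact_mod_cast hp2
    rwa [Nat.cast_sub (by omega), Nat.cast_one] at h'
  have hNpos : (0 : ℝ) < (n : ℝ) := by linarith
  have hPpos : (0 : ℝ) < (p : ℝ) * ((n : ℝ) - (p : ℝ)) := by nlinarith
  have hk2 : |(n : ℝ) - 2 * (p : ℝ)| ^ 2 = (n : ℝ) ^ 2 - 4 * ((p : ℝ) * ((n : ℝ) - (p : ℝ))) := by
    rw [sq_abs]; ring
  have hk0 : 0 ≤ |(n : ℝ) - 2 * (p : ℝ)| := abs_nonneg _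
  have hrad : ∀ h : ℝ, (0 : ℝ) ≤ (n : ℝ) ^ 2 * h ^ 2 + 4 * c * (p : ℝ) * ((n : ℝ) - (p : ℝ)) := by
    intro h
    have h1 : (0 : ℝ) ≤ 4 * c * (p : ℝ) * ((n : ℝ) - (p : ℝ)) := by
      apply mul_nonneg (by positivity) (by linarith)
    nlinarith [sq_nonneg h, sq_nonneg ((n : ℝ) * h)]
  have hkey : ∀ h : ℝ,
      pinchAlpha c p n h - (n : ℝ) * h ^ 2 - 4 * c * (p : ℝ) * ((n : ℝ) - (p : ℝ)) / (n : ℝ)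
        = (|(n : ℝ) - 2 * (p : ℝ)| *
            Real.sqrt ((n : ℝ) ^ 2 * h ^ 2 + 4 * c * (p : ℝ) * ((n : ℝ) - (p : ℝ)))
            - (n : ℝ) ^ 2 * h) ^ 2
          / (4 * ((p : ℝ) * ((n : ℝ) - (p : ℝ))) * (n : ℝ)) := by
    intro h
    exact pinch_key c (n : ℝ) (p : ℝ) h _ _ hPpos hNpos (Real.sq_sqrt (hrad h)) hk2
  refine ⟨?_, ?_, ?_⟩
  · intro h _
    have hq : (0 : ℝ) ≤ (|(n : ℝ) - 2 * (p : ℝ)| *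
        Real.sqrt ((n : ℝ) ^ 2 * h ^ 2 + 4 * c * (p : ℝ) * ((n : ℝ) - (p : ℝ)))
        - (n : ℝ) ^ 2 * h) ^ 2 / (4 * ((p : ℝ) * ((n : ℝ) - (p : ℝ))) * (n : ℝ)) := by
      positivity
    linarith [hkey h]
  · refine ⟨|(n : ℝ) - 2 * (p : ℝ)| * Real.sqrt c / (n : ℝ), by positivity, ?_⟩
    set k : ℝ := |(n : ℝ) - 2 * (p : ℝ)| with hkdef
    set h0 : ℝ := k * Real.sqrt c / (n : ℝ) with hh0
    have hc2 : Real.sqrt c ^ 2 = c := Real.sq_sqrt hc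
    have hA : (n : ℝ) ^ 2 * h0 ^ 2 = k ^ 2 * c := by
      rw [hh0, div_pow, mul_pow, hc2]
      field_simp
    have harg : (n : ℝ) ^ 2 * h0 ^ 2 + 4 * c * (p : ℝ) * ((n : ℝ) - (p : ℝ))
        = (Real.sqrt c * (n : ℝ)) ^ 2 := by
      rw [hA, mul_pow, hc2]
      linear_combination c * hk2
    have hs0 : Real.sqrt ((n : ℝ) ^ 2 * h0 ^ 2 + 4 * c * (p : ℝ) * ((n : ℝ) - (p : ℝ)))
        = Real.sqrt c * (n : ℝ) := by
      rw [harg, Real.sqrt_sq (by positivity)]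
    have hnum : k * (Real.sqrt c * (n : ℝ)) - (n : ℝ) ^ 2 * h0 = 0 := by
      rw [hh0]; field_simp; ring
    have h1 := hkey h0
    rw [hs0, hnum] at h1
    simp at h1
    linarith
  · intro h hh
    constructor
    · intro heq
      have h1 := hkey h
      rw [heq, sub_self] at h1
      have h2 : (|(n : ℝ) - 2 * (p : ℝ)| *
          Real.sqrt ((n : ℝ) ^ 2 * h ^ 2 + 4 * c * (p : ℝ) * ((n : ℝ) - (p : ℝ)))
          - (n : ℝ) ^ 2 * h) = 0 := by
        have hd : (0 : ℝ) < 4 * ((p : ℝ) * ((n : ℝ) - (p : ℝ))) * (n : ℝ) := by positivity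
        have := (div_eq_zero_iff.mp h1.symm).resolve_right (ne_of_gt hd)
        exact pow_eq_zero_iff (n := 2) (by norm_num) |>.mp this
      set s : ℝ := Real.sqrt ((n : ℝ) ^ 2 * h ^ 2 + 4 * c * (p : ℝ) * ((n : ℝ) - (p : ℝ))) with hs
      have hs2 : s ^ 2 = (n : ℝ) ^ 2 * h ^ 2 + 4 * c * (p : ℝ) * ((n : ℝ) - (p : ℝ)) :=
        Real.sq_sqrt (hrad h)
      have hks : |(n : ℝ) - 2 * (p : ℝ)| * s = (n : ℝ) ^ 2 * h := by linarith
      have hsq : (|(n : ℝ) - 2 * (p : ℝ)| * s) ^ 2 = ((n : ℝ) ^ 2 * h) ^ 2 := by rw [hks]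
      have h4 : 4 * ((p : ℝ) * ((n : ℝ) - (p : ℝ))) *
          ((n : ℝ) ^ 2 * c - ((n : ℝ) ^ 2 * h ^ 2 + 4 * c * (p : ℝ) * ((n : ℝ) - (p : ℝ)))) = 0 := by
        linear_combination hsq - |(n : ℝ) - 2 * (p : ℝ)| ^ 2 * hs2 -
          ((n : ℝ) ^ 2 * h ^ 2 + 4 * c * (p : ℝ) * ((n : ℝ) - (p : ℝ))) * hk2
      have h5 := (mul_eq_zero.mp h4).resolve_left (by positivity)
      linarith
    · intro hcond
      set k : ℝ := |(n : ℝ) - 2 * (p : ℝ)| with hkdef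
      have hc2 : Real.sqrt c ^ 2 = c := Real.sq_sqrt hc
      have harg : (n : ℝ) ^ 2 * h ^ 2 + 4 * c * (p : ℝ) * ((n : ℝ) - (p : ℝ))
          = (Real.sqrt c * (n : ℝ)) ^ 2 := by
        rw [hcond, mul_pow, hc2]; ring
      have hs0 : Real.sqrt ((n : ℝ) ^ 2 * h ^ 2 + 4 * c * (p : ℝ) * ((n : ℝ) - (p : ℝ)))
          = Real.sqrt c * (n : ℝ) := by
        rw [harg, Real.sqrt_sq (by positivity)]
      have h5 : ((n : ℝ) * h) ^ 2 = (k * Real.sqrt c) ^ 2 := by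
        rw [mul_pow, mul_pow, hc2]
        linear_combination hcond - c * hk2
      have h6 : (n : ℝ) * h = k * Real.sqrt c := by
        have hnh : (0 : ℝ) ≤ (n : ℝ) * h := by positivity
        have hks0 : (0 : ℝ) ≤ k * Real.sqrt c := by positivity
        rw [← Real.sqrt_sq hnh, h5, Real.sqrt_sq hks0]
      have hnum : k * (Real.sqrt c * (n : ℝ)) - (n : ℝ) ^ 2 * h = 0 := by
        linear_combination (-(n : ℝ)) * h6
      have h1 := hkey h
      rw [hs0, hnum] at h1
      simp at h1
      linarith
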